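/- As b → ∞ one has γ(b) → 0 and θ(b) → 1/Φ_q; consequently, for every fixed a ≥ 0, lim_{b→∞} J(a,b) = −λk·m(a)/(q + μq/(αΦ_q) + λ·e^{−μ_α a}) ≤ 0. In particular, choosing the dividend barrier b = ∞ can never be optimal. -/

import Mathlib

theorem stmt14 (c α lam q μ k : ℝ)
    (hc : 0 < c) (hα0 : 0 < α) (hα1 : α ≤ 1)
    (hlam : 0 < lam) (hq : 0 < q) (hμ : 0 < μ) (hk : 1 ≤ k)
    (Δ Φ ρ : ℝ)
    (hΔ : Δ = (c*μ - α*lam - α*q)^2 + 4*α*c*μ*q)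
    (hΦ : Φ = (-(c*μ - α*lam - α*q) + Real.sqrt Δ) / (2*α*c))
    (hρ : ρ = (-(c*μ - α*lam - α*q) - Real.sqrt Δ) / (2*α*c))
    (hΦpos : 0 < Φ) (hρneg : ρ < 0)
    (γ θf m : ℝ → ℝ) (D J ψ : ℝ → ℝ → ℝ)
    (hγ : ∀ b, γ b = (Φ - ρ)/(Φ*Real.exp (Φ*b) - ρ*Real.exp (ρ*b)))
    (hθf : ∀ b, θf b = (Real.exp (Φ*b) - Real.exp (ρ*b))/(Φ*Real.exp (Φ*b) - ρ*Real.exp (ρ*b)))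
    (hm : ∀ a, m a = (1 - Real.exp (-(μ/α)*a)*((μ/α)*a + 1))/(μ/α))
    (hD : ∀ a b, D a b = q + (μ/α)*q*θf b + lam*Real.exp (-(μ/α)*a))
    (hJ : ∀ a b, J a b = (c*γ b - lam*k*m a)/(D a b))
    (hψ : ∀ a b, ψ a b = -(a*k*(q + q*(μ/α)*θf b)) + c*γ b + lam*k*(Real.exp (-(μ/α)*a) - 1)/(μ/α)) :
    Filter.Tendsto γ Filter.atTop (nhds 0) ∧
    Filter.Tendsto θf Filter.atTop (nhds (1/Φ)) ∧
    ∀ a : ℝ, 0 ≤ a →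
      Filter.Tendsto (fun b => J a b) Filter.atTop
        (nhds (-(lam*k*m a)/(q + μ*q/(α*Φ) + lam*Real.exp (-(μ/α)*a)))) ∧
      -(lam*k*m a)/(q + μ*q/(α*Φ) + lam*Real.exp (-(μ/α)*a)) ≤ 0 := by
  have hden : ∀ b : ℝ, Φ*Real.exp (Φ*b) - ρ*Real.exp (ρ*b)
      = Real.exp (Φ*b) * (Φ - ρ*Real.exp ((ρ-Φ)*b)) := by
    intro b
    have h1 : Real.exp (ρ*b) = Real.exp (Φ*b) * Real.exp ((ρ-Φ)*b) := by
      rw [← Real.exp_add]; ring_nf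
    rw [h1]; ring
  have hnum : ∀ b : ℝ, Real.exp (Φ*b) - Real.exp (ρ*b)
      = Real.exp (Φ*b) * (1 - Real.exp ((ρ-Φ)*b)) := by
    intro b
    have h1 : Real.exp (ρ*b) = Real.exp (Φ*b) * Real.exp ((ρ-Φ)*b) := by
      rw [← Real.exp_add]; ring_nf
    rw [h1]; ring
  have hE0 : Filter.Tendsto (fun b => Real.exp ((ρ-Φ)*b)) Filter.atTop (nhds 0) := by
    have h : Filter.Tendsto (fun b : ℝ => (Φ-ρ)*b) Filter.atTop Filter.atTop :=
      Filter.Tendsto.const_mul_atTop (by linarith) Filter.tendsto_id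
    have h2 := Real.tendsto_exp_neg_atTop_nhds_zero.comp h
    exact h2.congr fun b => by rw [Function.comp_apply, show -((Φ-ρ)*b) = (ρ-Φ)*b by ring]
  have hEn0 : Filter.Tendsto (fun b => Real.exp (-(Φ*b))) Filter.atTop (nhds 0) := by
    have h : Filter.Tendsto (fun b : ℝ => Φ*b) Filter.atTop Filter.atTop :=
      Filter.Tendsto.const_mul_atTop hΦpos Filter.tendsto_id
    exact Real.tendsto_exp_neg_atTop_nhds_zero.comp h
  have hγ' : γ = fun b => ((Φ-ρ)*Real.exp (-(Φ*b)))/(Φ - ρ*Real.exp ((ρ-Φ)*b)) := by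
    funext b
    rw [hγ, hden, div_mul_eq_div_div]
    congr 1
    rw [div_eq_mul_inv, Real.exp_neg]
  have hθ' : θf = fun b => (1 - Real.exp ((ρ-Φ)*b))/(Φ - ρ*Real.exp ((ρ-Φ)*b)) := by
    funext b
    rw [hθf, hden, hnum, mul_div_mul_left _ _ (Real.exp_ne_zero _)]
  have hΦne : Φ ≠ 0 := ne_of_gt hΦpos
  have hγ0 : Filter.Tendsto γ Filter.atTop (nhds 0) := by
    rw [hγ']
    have h1 : Filter.Tendsto (fun b => (Φ-ρ)*Real.exp (-(Φ*b))) Filter.atTop (nhds ((Φ-ρ)*0)) :=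
      tendsto_const_nhds.mul hEn0
    have h2 : Filter.Tendsto (fun b => Φ - ρ*Real.exp ((ρ-Φ)*b)) Filter.atTop (nhds (Φ - ρ*0)) :=
      tendsto_const_nhds.sub (tendsto_const_nhds.mul hE0)
    have := h1.div h2 (by simpa using hΦne)
    simpa [Pi.div_def] using this
  have hθ1 : Filter.Tendsto θf Filter.atTop (nhds (1/Φ)) := by
    rw [hθ']
    have h1 : Filter.Tendsto (fun b => 1 - Real.exp ((ρ-Φ)*b)) Filter.atTop (nhds (1 - 0)) :=
      tendsto_const_nhds.sub hE0
    have h2 : Filter.Tendsto (fun b => Φ - ρ*Real.exp ((ρ-Φ)*b)) Filter.atTop (nhds (Φ - ρ*0)) :=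
      tendsto_const_nhds.sub (tendsto_const_nhds.mul hE0)
    have := h1.div h2 (by simpa using hΦne)
    simpa [Pi.div_def] using this
  refine ⟨hγ0, hθ1, fun a ha => ?_⟩
  have h1' : 0 < μ*q/(α*Φ) := div_pos (mul_pos hμ hq) (mul_pos hα0 hΦpos)
  have h2' : 0 < lam*Real.exp (-(μ/α)*a) := mul_pos hlam (Real.exp_pos _)
  have hLpos : 0 < q + μ*q/(α*Φ) + lam*Real.exp (-(μ/α)*a) := by linarith
  have hLeq : q + (μ/α)*q*(1/Φ) + lam*Real.exp (-(μ/α)*a)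
      = q + μ*q/(α*Φ) + lam*Real.exp (-(μ/α)*a) := by
    have : (μ/α)*q*(1/Φ) = μ*q/(α*Φ) := by
      field_simp
    rw [this]
  have hJt : Filter.Tendsto (fun b => J a b) Filter.atTop
      (nhds (-(lam*k*m a)/(q + μ*q/(α*Φ) + lam*Real.exp (-(μ/α)*a)))) := by
    have hJeq : (fun b => J a b)
        = fun b => (c*γ b - lam*k*m a)/(q + (μ/α)*q*θf b + lam*Real.exp (-(μ/α)*a)) := by
      funext b; rw [hJ, hD]
    rw [hJeq]
    have h1 : Filter.Tendsto (fun b => c*γ b - lam*k*m a) Filter.atTop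
        (nhds (c*0 - lam*k*m a)) :=
      (tendsto_const_nhds.mul hγ0).sub tendsto_const_nhds
    have h2 : Filter.Tendsto (fun b => q + (μ/α)*q*θf b + lam*Real.exp (-(μ/α)*a))
        Filter.atTop (nhds (q + (μ/α)*q*(1/Φ) + lam*Real.exp (-(μ/α)*a))) :=
      (tendsto_const_nhds.add (tendsto_const_nhds.mul hθ1)).add tendsto_const_nhds
    rw [hLeq] at h2
    have := h1.div h2 (ne_of_gt hLpos)
    simpa [Pi.div_def] using this
  have hm0 : 0 ≤ m a := by
    rw [hm, show -(μ/α)*a = -((μ/α)*a) by ring, Real.exp_neg]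
    have he := Real.add_one_le_exp ((μ/α)*a)
    have hep : 0 < Real.exp ((μ/α)*a) := Real.exp_pos _
    have hb : (Real.exp ((μ/α)*a))⁻¹ * ((μ/α)*a + 1) ≤ 1 := by
      rw [inv_mul_le_iff₀ hep, mul_one]; linarith
    have hμα : 0 < μ/α := div_pos hμ hα0
    exact div_nonneg (by linarith) hμα.le
  refine ⟨hJt, ?_⟩
  apply div_nonpos_of_nonpos_of_nonneg
  · have hk0 : 0 ≤ lam*k*m a :=
      mul_nonneg (mul_nonneg hlam.le (le_trans zero_le_one hk)) hm0
    linarith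
  · linarith
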